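/- Compositionality for the tensor (parallel) operation: for nets M : k→l and N : m→n, markings X, X' ⊆ P_M, Y, Y' ⊆ P_N, the tensor net M⊗N has a step transition (X + Y) --αγ/βδ--> (X' + Y') if and only if X --α/β--> X' in M and Y --γ/δ--> Y' in N, where αγ denotes concatenation of strings α ∈ {0,1}^k and γ ∈ {0,1}^m. -/

import Mathlib

/-- A net with boundaries `N : k → l` with places `P` and transitions `T`. -/
structure Net (P : Type) (T : Type) (k l : ℕ) where
  pre : T → Set P
  post : T → Set P
  src : T → Set (Fin k)
  tgt : T → Set (Fin l)

namespace Net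

variable {P Q R : Type} {T₁ T₂ T₃ : Type} {k l m n : ℕ}

/-- Distinct transitions have disjoint boundary connections. -/
def BoundaryInj (N : Net P T₁ k l) : Prop :=
  ∀ t t' : T₁, t ≠ t' → N.src t ∩ N.src t' = ∅ ∧ N.tgt t ∩ N.tgt t' = ∅

def preSet (N : Net P T₁ k l) (U : Set T₁) : Set P := ⋃ t ∈ U, N.pre t
def postSet (N : Net P T₁ k l) (U : Set T₁) : Set P := ⋃ t ∈ U, N.post t
def srcSet (N : Net P T₁ k l) (U : Set T₁) : Set (Fin k) := ⋃ t ∈ U, N.src t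
def tgtSet (N : Net P T₁ k l) (U : Set T₁) : Set (Fin l) := ⋃ t ∈ U, N.tgt t

/-- Mutual independence of a set of transitions. -/
def MI (N : Net P T₁ k l) (U : Set T₁) : Prop :=
  ∀ t ∈ U, ∀ t' ∈ U, t ≠ t' →
    (N.pre t ∪ N.post t) ∩ (N.pre t' ∪ N.post t') = ∅

/-- The (1-bounded) step transition relation on markings. -/
def Step (N : Net P T₁ k l) (X : Set P) (α : Set (Fin k)) (β : Set (Fin l))
    (X' : Set P) : Prop :=
  ∃ U : Set T₁, N.MI U ∧ N.preSet U ⊆ X ∧ N.postSet U ∩ X = ∅ ∧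
    X' = (X \ N.preSet U) ∪ N.postSet U ∧ N.srcSet U = α ∧ N.tgtSet U = β

/-- A synchronisation between `N : k → l` and `M : l → m`. -/
def Sync (N : Net P T₁ k l) (M : Net Q T₂ l m) (U : Set T₁) (V : Set T₂) : Prop :=
  N.MI U ∧ M.MI V ∧ N.tgtSet U = M.srcSet V

/-- A minimal synchronisation: non-trivial, and any synchronisation below it is
trivial (or the synchronisation itself). -/
def MinSync (N : Net P T₁ k l) (M : Net Q T₂ l m) (U : Set T₁) (V : Set T₂) : Prop :=
  Sync N M U V ∧ ¬(U = ∅ ∧ V = ∅) ∧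
    ∀ U' V', U' ⊆ U → V' ⊆ V → Sync N M U' V' →
      (U' = ∅ ∧ V' = ∅) ∨ (U' = U ∧ V' = V)

/-- Independence of two synchronisations: unions componentwise MI, and disjoint. -/
def IndepSync (N : Net P T₁ k l) (M : Net Q T₂ l m)
    (s s' : Set T₁ × Set T₂) : Prop :=
  N.MI (s.1 ∪ s'.1) ∧ M.MI (s.2 ∪ s'.2) ∧ s.1 ∩ s'.1 = ∅ ∧ s.2 ∩ s'.2 = ∅

/-- Composition `N ; M` of nets along a common boundary. -/
def comp (N : Net P T₁ k l) (M : Net Q T₂ l m) :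
    Net (P ⊕ Q) {s : Set T₁ × Set T₂ // MinSync N M s.1 s.2} k m where
  pre s := Sum.inl '' N.preSet s.1.1 ∪ Sum.inr '' M.preSet s.1.2
  post s := Sum.inl '' N.postSet s.1.1 ∪ Sum.inr '' M.postSet s.1.2
  src s := N.srcSet s.1.1
  tgt s := M.tgtSet s.1.2

/-- Tensor (parallel composition) of nets. -/
def tensor (M : Net P T₁ k l) (N : Net Q T₂ m n) :
    Net (P ⊕ Q) (T₁ ⊕ T₂) (k + m) (l + n) where
  pre := Sum.elim (fun t => Sum.inl '' M.pre t) (fun t => Sum.inr '' N.pre t)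
  post := Sum.elim (fun t => Sum.inl '' M.post t) (fun t => Sum.inr '' N.post t)
  src := Sum.elim (fun t => Fin.castAdd m '' M.src t) (fun t => Fin.natAdd k '' N.src t)
  tgt := Sum.elim (fun t => Fin.castAdd n '' M.tgt t) (fun t => Fin.natAdd l '' N.tgt t)

/-- Disjoint union of markings. -/
def mU (X : Set P) (Y : Set Q) : Set (P ⊕ Q) := Sum.inl '' X ∪ Sum.inr '' Y

/-- Traces: sequences of consecutive step transitions, recorded by their labels. -/
def Trace (N : Net P T₁ k l) :
    Set P → List (Set (Fin k) × Set (Fin l)) → Set P → Prop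
  | X, [], X' => X = X'
  | X, ab :: w, X' => ∃ X'', N.Step X ab.1 ab.2 X'' ∧ N.Trace X'' w X'

/-- Epsilon (internal) steps. -/
def EpsStep (N : Net P T₁ k l) (X X' : Set P) : Prop := N.Step X ∅ ∅ X'

/-- The weak transition relation. -/
def Weak (N : Net P T₁ k l) (X : Set P) (α : Set (Fin k)) (β : Set (Fin l))
    (X' : Set P) : Prop :=
  ∃ X'' X''', Relation.ReflTransGen N.EpsStep X X'' ∧ N.Step X'' α β X''' ∧
    Relation.ReflTransGen N.EpsStep X''' X'

end Net

/-- An NFA with boundaries `A : k → l`: alphabet `{0,1}^k × {0,1}^l`. -/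
structure BNFA (S : Type) (k l : ℕ) where
  step : S → Set (Fin k) × Set (Fin l) → S → Prop
  start : Set S
  accept : Set S

namespace BNFA

variable {S S' S'' : Type} {k l m n : ℕ}

def Run (A : BNFA S k l) : S → List (Set (Fin k) × Set (Fin l)) → S → Prop
  | s, [], s' => s = s'
  | s, a :: w, s' => ∃ s₁, A.step s a s₁ ∧ A.Run s₁ w s'

def Lang (A : BNFA S k l) : Set (List (Set (Fin k) × Set (Fin l))) :=
  {w | ∃ s ∈ A.start, ∃ s' ∈ A.accept, A.Run s w s'}

/-- Sequential composition of NFAs with boundaries (synchronising product). -/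
def comp (A : BNFA S k l) (B : BNFA S' l m) : BNFA (S × S') k m where
  step p a q := ∃ γ, A.step p.1 (a.1, γ) q.1 ∧ B.step p.2 (γ, a.2) q.2
  start := {p | p.1 ∈ A.start ∧ p.2 ∈ B.start}
  accept := {p | p.1 ∈ A.accept ∧ p.2 ∈ B.accept}

/-- Tensor of NFAs with boundaries. -/
def tensor (A : BNFA S k l) (B : BNFA S' m n) : BNFA (S × S') (k + m) (l + n) where
  step p a q :=
    A.step p.1 (Fin.castAdd m ⁻¹' a.1, Fin.castAdd n ⁻¹' a.2) q.1 ∧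
    B.step p.2 (Fin.natAdd k ⁻¹' a.1, Fin.natAdd l ⁻¹' a.2) q.2
  start := {p | p.1 ∈ A.start ∧ p.2 ∈ B.start}
  accept := {p | p.1 ∈ A.accept ∧ p.2 ∈ B.accept}

/-- Isomorphism of NFAs with boundaries. -/
def Iso (A : BNFA S k l) (B : BNFA S' k l) : Prop :=
  ∃ e : S ≃ S', (∀ s a s', A.step s a s' ↔ B.step (e s) a (e s')) ∧
    (∀ s, s ∈ A.start ↔ e s ∈ B.start) ∧ (∀ s, s ∈ A.accept ↔ e s ∈ B.accept)

/-- Epsilon transitions of an NFA with boundaries. -/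
def EpsA (A : BNFA S k l) (s s' : S) : Prop := A.step s (∅, ∅) s'

/-- Epsilon closure of an NFA with boundaries. -/
def epsClose (A : BNFA S k l) : BNFA S k l where
  step s a s' := ∃ s₁ s₂, Relation.ReflTransGen A.EpsA s s₁ ∧ A.step s₁ a s₂ ∧
    Relation.ReflTransGen A.EpsA s₂ s'
  start := A.start
  accept := A.accept

end BNFA

/-- The step-semantics NFA of a net with boundaries, with given initial and
final sets of markings. -/
def netNFA {P T : Type} {k l : ℕ} (N : Net P T k l)
    (I F : Set (Set P)) : BNFA (Set P) k l where
  step X a X' := N.Step X a.1 a.2 X'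
  start := I
  accept := F

/-- A bundled NFA with boundaries. -/
structure BBNFA (k l : ℕ) where
  S : Type
  nfa : BNFA S k l

section Helpers

variable {A B C : Type} {f : A → C} {g : B → C}

lemma mem_uimage_left (hf : Function.Injective f) (hdisj : ∀ a b, f a ≠ g b)
    {s : Set A} {t : Set B} {a : A} : f a ∈ f '' s ∪ g '' t ↔ a ∈ s := by
  simp only [Set.mem_union, Set.mem_image]
  constructor
  · rintro (⟨x, hx, hfa⟩ | ⟨x, hx, hfa⟩)
    · rwa [← hf hfa]
    · exact absurd hfa (hdisj a x).symm
  · intro h; exact Or.inl ⟨a, h, rfl⟩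

lemma mem_uimage_right (hg : Function.Injective g) (hdisj : ∀ a b, f a ≠ g b)
    {s : Set A} {t : Set B} {b : B} : g b ∈ f '' s ∪ g '' t ↔ b ∈ t := by
  simp only [Set.mem_union, Set.mem_image]
  constructor
  · rintro (⟨x, hx, hfa⟩ | ⟨x, hx, hfa⟩)
    · exact absurd hfa (hdisj x b)
    · rwa [← hg hfa]
  · intro h; exact Or.inr ⟨b, h, rfl⟩

lemma uimage_subset_iff (hf : Function.Injective f) (hg : Function.Injective g)
    (hdisj : ∀ a b, f a ≠ g b) {s s' : Set A} {t t' : Set B} :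
    f '' s ∪ g '' t ⊆ f '' s' ∪ g '' t' ↔ s ⊆ s' ∧ t ⊆ t' := by
  constructor
  · intro h
    refine ⟨fun a ha => ?_, fun b hb => ?_⟩
    · exact (mem_uimage_left hf hdisj).mp (h (Or.inl ⟨a, ha, rfl⟩))
    · exact (mem_uimage_right hg hdisj).mp (h (Or.inr ⟨b, hb, rfl⟩))
  · rintro ⟨h1, h2⟩
    exact Set.union_subset_union (Set.image_mono h1) (Set.image_mono h2)

lemma uimage_eq_iff (hf : Function.Injective f) (hg : Function.Injective g)
    (hdisj : ∀ a b, f a ≠ g b) {s s' : Set A} {t t' : Set B} :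
    f '' s ∪ g '' t = f '' s' ∪ g '' t' ↔ s = s' ∧ t = t' := by
  constructor
  · intro h
    have h1 := (uimage_subset_iff hf hg hdisj).mp h.le
    have h2 := (uimage_subset_iff hf hg hdisj).mp h.ge
    exact ⟨le_antisymm h1.1 h2.1, le_antisymm h1.2 h2.2⟩
  · rintro ⟨rfl, rfl⟩; rfl

lemma uimage_inter_empty_iff (hf : Function.Injective f) (hg : Function.Injective g)
    (hdisj : ∀ a b, f a ≠ g b) {s s' : Set A} {t t' : Set B} :
    (f '' s ∪ g '' t) ∩ (f '' s' ∪ g '' t') = ∅ ↔ s ∩ s' = ∅ ∧ t ∩ t' = ∅ := by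
  simp only [Set.eq_empty_iff_forall_notMem, Set.mem_inter_iff, not_and]
  constructor
  · intro h
    refine ⟨fun a ha ha' => ?_, fun b hb hb' => ?_⟩
    · exact h (f a) (Or.inl ⟨a, ha, rfl⟩) (Or.inl ⟨a, ha', rfl⟩)
    · exact h (g b) (Or.inr ⟨b, hb, rfl⟩) (Or.inr ⟨b, hb', rfl⟩)
  · rintro ⟨h1, h2⟩ c (⟨a, ha, rfl⟩ | ⟨b, hb, rfl⟩) hc
    · exact h1 a ha ((mem_uimage_left hf hdisj).mp hc)
    · exact h2 b hb ((mem_uimage_right hg hdisj).mp hc)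

lemma uimage_diff (hf : Function.Injective f) (hg : Function.Injective g)
    (hdisj : ∀ a b, f a ≠ g b) {s s' : Set A} {t t' : Set B} :
    (f '' s ∪ g '' t) \ (f '' s' ∪ g '' t') = f '' (s \ s') ∪ g '' (t \ t') := by
  ext c
  simp only [Set.mem_diff, Set.mem_union, Set.mem_image]
  constructor
  · rintro ⟨⟨a, ha, rfl⟩ | ⟨b, hb, rfl⟩, hc⟩
    · exact Or.inl ⟨a, ⟨ha, fun h => hc ((mem_uimage_left hf hdisj).mpr h)⟩, rfl⟩
    · exact Or.inr ⟨b, ⟨hb, fun h => hc ((mem_uimage_right hg hdisj).mpr h)⟩, rfl⟩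
  · rintro (⟨a, ⟨ha, ha'⟩, rfl⟩ | ⟨b, ⟨hb, hb'⟩, rfl⟩)
    · exact ⟨Or.inl ⟨a, ha, rfl⟩, fun h => ha' ((mem_uimage_left hf hdisj).mp h)⟩
    · exact ⟨Or.inr ⟨b, hb, rfl⟩, fun h => hb' ((mem_uimage_right hg hdisj).mp h)⟩

end Helpers

lemma castAdd_injective (k m : ℕ) : Function.Injective (Fin.castAdd m : Fin k → Fin (k + m)) :=
  fun a b h => Fin.ext (by simpa using congrArg Fin.val h)

lemma natAdd_injective (k m : ℕ) : Function.Injective (Fin.natAdd k : Fin m → Fin (k + m)) :=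
  fun a b h => Fin.ext (by
    have := congrArg Fin.val h
    simpa using Nat.add_left_cancel this)

lemma castAdd_ne_natAdd {k m : ℕ} (a : Fin k) (b : Fin m) :
    Fin.castAdd m a ≠ Fin.natAdd k b := by
  intro h
  have := congrArg Fin.val h
  simp only [Fin.coe_castAdd, Fin.coe_natAdd] at this
  omega

lemma inl_ne_inr {A B : Type} (a : A) (b : B) : (Sum.inl a : A ⊕ B) ≠ Sum.inr b :=
  fun h => nomatch h

namespace Net

variable {P Q : Type} {T₁ T₂ : Type} {k l m n : ℕ}

lemma tensor_preSet (M : Net P T₁ k l) (N : Net Q T₂ m n) (U : Set (T₁ ⊕ T₂)) :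
    (M.tensor N).preSet U =
      Sum.inl '' M.preSet (Sum.inl ⁻¹' U) ∪ Sum.inr '' N.preSet (Sum.inr ⁻¹' U) := by
  ext p
  simp only [preSet, Set.mem_iUnion, Set.mem_union, Set.mem_image, Set.mem_preimage,
    tensor]
  constructor
  · rintro ⟨(t | t), hU, hp⟩
    · simp only [Sum.elim_inl, Set.mem_image] at hp
      obtain ⟨q, hq, rfl⟩ := hp
      exact Or.inl ⟨q, ⟨t, hU, hq⟩, rfl⟩
    · simp only [Sum.elim_inr, Set.mem_image] at hp
      obtain ⟨q, hq, rfl⟩ := hp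
      exact Or.inr ⟨q, ⟨t, hU, hq⟩, rfl⟩
  · rintro (⟨q, ⟨t, hU, hq⟩, rfl⟩ | ⟨q, ⟨t, hU, hq⟩, rfl⟩)
    · exact ⟨Sum.inl t, hU, Set.mem_image_of_mem _ hq⟩
    · exact ⟨Sum.inr t, hU, Set.mem_image_of_mem _ hq⟩

lemma tensor_postSet (M : Net P T₁ k l) (N : Net Q T₂ m n) (U : Set (T₁ ⊕ T₂)) :
    (M.tensor N).postSet U =
      Sum.inl '' M.postSet (Sum.inl ⁻¹' U) ∪ Sum.inr '' N.postSet (Sum.inr ⁻¹' U) := by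
  ext p
  simp only [postSet, Set.mem_iUnion, Set.mem_union, Set.mem_image, Set.mem_preimage,
    tensor]
  constructor
  · rintro ⟨(t | t), hU, hp⟩
    · simp only [Sum.elim_inl, Set.mem_image] at hp
      obtain ⟨q, hq, rfl⟩ := hp
      exact Or.inl ⟨q, ⟨t, hU, hq⟩, rfl⟩
    · simp only [Sum.elim_inr, Set.mem_image] at hp
      obtain ⟨q, hq, rfl⟩ := hp
      exact Or.inr ⟨q, ⟨t, hU, hq⟩, rfl⟩
  · rintro (⟨q, ⟨t, hU, hq⟩, rfl⟩ | ⟨q, ⟨t, hU, hq⟩, rfl⟩)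
    · exact ⟨Sum.inl t, hU, Set.mem_image_of_mem _ hq⟩
    · exact ⟨Sum.inr t, hU, Set.mem_image_of_mem _ hq⟩

lemma tensor_srcSet (M : Net P T₁ k l) (N : Net Q T₂ m n) (U : Set (T₁ ⊕ T₂)) :
    (M.tensor N).srcSet U =
      Fin.castAdd m '' M.srcSet (Sum.inl ⁻¹' U) ∪ Fin.natAdd k '' N.srcSet (Sum.inr ⁻¹' U) := by
  ext p
  simp only [srcSet, Set.mem_iUnion, Set.mem_union, Set.mem_image, Set.mem_preimage,
    tensor]
  constructor
  · rintro ⟨(t | t), hU, hp⟩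
    · simp only [Sum.elim_inl, Set.mem_image] at hp
      obtain ⟨q, hq, rfl⟩ := hp
      exact Or.inl ⟨q, ⟨t, hU, hq⟩, rfl⟩
    · simp only [Sum.elim_inr, Set.mem_image] at hp
      obtain ⟨q, hq, rfl⟩ := hp
      exact Or.inr ⟨q, ⟨t, hU, hq⟩, rfl⟩
  · rintro (⟨q, ⟨t, hU, hq⟩, rfl⟩ | ⟨q, ⟨t, hU, hq⟩, rfl⟩)
    · exact ⟨Sum.inl t, hU, Set.mem_image_of_mem _ hq⟩
    · exact ⟨Sum.inr t, hU, Set.mem_image_of_mem _ hq⟩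

lemma tensor_tgtSet (M : Net P T₁ k l) (N : Net Q T₂ m n) (U : Set (T₁ ⊕ T₂)) :
    (M.tensor N).tgtSet U =
      Fin.castAdd n '' M.tgtSet (Sum.inl ⁻¹' U) ∪ Fin.natAdd l '' N.tgtSet (Sum.inr ⁻¹' U) := by
  ext p
  simp only [tgtSet, Set.mem_iUnion, Set.mem_union, Set.mem_image, Set.mem_preimage,
    tensor]
  constructor
  · rintro ⟨(t | t), hU, hp⟩
    · simp only [Sum.elim_inl, Set.mem_image] at hp
      obtain ⟨q, hq, rfl⟩ := hp
      exact Or.inl ⟨q, ⟨t, hU, hq⟩, rfl⟩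
    · simp only [Sum.elim_inr, Set.mem_image] at hp
      obtain ⟨q, hq, rfl⟩ := hp
      exact Or.inr ⟨q, ⟨t, hU, hq⟩, rfl⟩
  · rintro (⟨q, ⟨t, hU, hq⟩, rfl⟩ | ⟨q, ⟨t, hU, hq⟩, rfl⟩)
    · exact ⟨Sum.inl t, hU, Set.mem_image_of_mem _ hq⟩
    · exact ⟨Sum.inr t, hU, Set.mem_image_of_mem _ hq⟩

lemma tensor_MI_iff (M : Net P T₁ k l) (N : Net Q T₂ m n) (U : Set (T₁ ⊕ T₂)) :
    (M.tensor N).MI U ↔ M.MI (Sum.inl ⁻¹' U) ∧ N.MI (Sum.inr ⁻¹' U) := by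
  constructor
  · intro h
    constructor
    · intro t ht t' ht' hne
      have := h (Sum.inl t) ht (Sum.inl t') ht' (fun he => hne (Sum.inl.inj he))
      simp only [tensor, Sum.elim_inl, ← Set.image_union] at this
      rw [Set.eq_empty_iff_forall_notMem] at this ⊢
      rintro p ⟨h1, h2⟩
      exact this (Sum.inl p) ⟨⟨p, h1, rfl⟩, ⟨p, h2, rfl⟩⟩
    · intro t ht t' ht' hne
      have := h (Sum.inr t) ht (Sum.inr t') ht' (fun he => hne (Sum.inr.inj he))
      simp only [tensor, Sum.elim_inr, ← Set.image_union] at this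
      rw [Set.eq_empty_iff_forall_notMem] at this ⊢
      rintro p ⟨h1, h2⟩
      exact this (Sum.inr p) ⟨⟨p, h1, rfl⟩, ⟨p, h2, rfl⟩⟩
  · rintro ⟨h1, h2⟩ t ht t' ht' hne
    rw [Set.eq_empty_iff_forall_notMem]
    rintro p ⟨hp1, hp2⟩
    match t, t' with
    | Sum.inl t, Sum.inl t' =>
      have := h1 t ht t' ht' (fun he => hne (by rw [he]))
      rw [Set.eq_empty_iff_forall_notMem] at this
      simp only [tensor, Sum.elim_inl, ← Set.image_union, Set.mem_image] at hp1 hp2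
      obtain ⟨q, hq, rfl⟩ := hp1
      obtain ⟨q', hq', he⟩ := hp2
      rw [Sum.inl.injEq] at he; subst he
      exact this _ ⟨hq, hq'⟩
    | Sum.inl t, Sum.inr t' =>
      simp only [tensor, Sum.elim_inl, Sum.elim_inr, ← Set.image_union, Set.mem_image] at hp1 hp2
      obtain ⟨q, hq, rfl⟩ := hp1
      obtain ⟨q', hq', he⟩ := hp2
      exact nomatch he
    | Sum.inr t, Sum.inl t' =>
      simp only [tensor, Sum.elim_inl, Sum.elim_inr, ← Set.image_union, Set.mem_image] at hp1 hp2
      obtain ⟨q, hq, rfl⟩ := hp1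
      obtain ⟨q', hq', he⟩ := hp2
      exact nomatch he
    | Sum.inr t, Sum.inr t' =>
      have := h2 t ht t' ht' (fun he => hne (by rw [he]))
      rw [Set.eq_empty_iff_forall_notMem] at this
      simp only [tensor, Sum.elim_inr, ← Set.image_union, Set.mem_image] at hp1 hp2
      obtain ⟨q, hq, rfl⟩ := hp1
      obtain ⟨q', hq', he⟩ := hp2
      rw [Sum.inr.injEq] at he; subst he
      exact this _ ⟨hq, hq'⟩

end Net

open Net in
/-- compositionality of the step semantics for the tensor `M ⊗ N`. -/
theorem tensor_compositionality {P Q T₁ T₂ : Type} {k l m n : ℕ}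
    (M : Net P T₁ k l) (N : Net Q T₂ m n)
    (X X' : Set P) (Y Y' : Set Q)
    (α : Set (Fin k)) (β : Set (Fin l)) (γ : Set (Fin m)) (δ : Set (Fin n)) :
    (M.tensor N).Step (mU X Y)
        (Fin.castAdd m '' α ∪ Fin.natAdd k '' γ)
        (Fin.castAdd n '' β ∪ Fin.natAdd l '' δ) (mU X' Y') ↔
      M.Step X α β X' ∧ N.Step Y γ δ Y' := by
  have hinl : Function.Injective (Sum.inl : P → P ⊕ Q) := Sum.inl_injective
  have hinr : Function.Injective (Sum.inr : Q → P ⊕ Q) := Sum.inr_injective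
  have hd : ∀ (a : P) (b : Q), (Sum.inl a : P ⊕ Q) ≠ Sum.inr b := inl_ne_inr
  constructor
  · rintro ⟨U, hMI, hpre, hpost, hX', hsrc, htgt⟩
    set U₁ := Sum.inl ⁻¹' U with hU₁
    set U₂ := Sum.inr ⁻¹' U with hU₂
    rw [tensor_preSet] at hpre hX'
    rw [tensor_postSet] at hpost hX'
    rw [tensor_srcSet] at hsrc
    rw [tensor_tgtSet] at htgt
    rw [tensor_MI_iff] at hMI
    simp only [Net.mU] at hpre hpost hX'
    have hpre' := (uimage_subset_iff hinl hinr hd).mp hpre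
    have hpost' := (uimage_inter_empty_iff hinl hinr hd).mp hpost
    rw [uimage_diff hinl hinr hd, Set.union_union_union_comm,
      ← Set.image_union, ← Set.image_union] at hX'
    have hX'' := (uimage_eq_iff hinl hinr hd).mp hX'
    have hsrc' := (uimage_eq_iff (castAdd_injective k m) (natAdd_injective k m)
      castAdd_ne_natAdd).mp hsrc
    have htgt' := (uimage_eq_iff (castAdd_injective l n) (natAdd_injective l n)
      castAdd_ne_natAdd).mp htgt
    exact ⟨⟨U₁, hMI.1, hpre'.1, hpost'.1, hX''.1, hsrc'.1, htgt'.1⟩,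
      ⟨U₂, hMI.2, hpre'.2, hpost'.2, hX''.2, hsrc'.2, htgt'.2⟩⟩
  · rintro ⟨⟨U₁, hMI₁, hpre₁, hpost₁, hX₁, hsrc₁, htgt₁⟩,
      ⟨U₂, hMI₂, hpre₂, hpost₂, hX₂, hsrc₂, htgt₂⟩⟩
    have e1 : ∀ s : Set T₁, Sum.inl ⁻¹' (Sum.inl '' s : Set (T₁ ⊕ T₂)) = s :=
      fun s => Set.preimage_image_eq s Sum.inl_injective
    have e2 : ∀ s : Set T₂, Sum.inr ⁻¹' (Sum.inr '' s : Set (T₁ ⊕ T₂)) = s :=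
      fun s => Set.preimage_image_eq s Sum.inr_injective
    refine ⟨Sum.inl '' U₁ ∪ Sum.inr '' U₂, ?_, ?_, ?_, ?_, ?_, ?_⟩
    all_goals
      try rw [tensor_MI_iff]
      try rw [tensor_preSet]
      try rw [tensor_postSet]
      try rw [tensor_srcSet]
      try rw [tensor_tgtSet]
    all_goals
      simp only [Set.preimage_union, e1, e2,
        Set.preimage_inl_image_inr, Set.preimage_inr_image_inl,
        Set.union_empty, Set.empty_union]
    · exact ⟨hMI₁, hMI₂⟩
    · exact (uimage_subset_iff hinl hinr hd).mpr ⟨hpre₁, hpre₂⟩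
    · exact (uimage_inter_empty_iff hinl hinr hd).mpr ⟨hpost₁, hpost₂⟩
    · rw [Net.mU, Net.mU, uimage_diff hinl hinr hd, Set.union_union_union_comm,
        ← Set.image_union, ← Set.image_union]
      exact (uimage_eq_iff hinl hinr hd).mpr ⟨hX₁, hX₂⟩
    · rw [hsrc₁, hsrc₂]
    · rw [htgt₁, htgt₂]
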